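/- Let D be a category with chosen pullbacks, and let f : (I, a) → (K, c) and g : (J, b) → (K, c) be morphisms in the Grothendieck twist Tw(D), with underlying functions f : I → K and g : J → K and components F_i : a i ⟶ c (f i) and G_j : b j ⟶ c (g j). Then the object of Tw(D) whose index set is the fiber product I ×_K J = {(i, j) : I × J // f i = g j} and whose family assigns to (i, j) the pullback in D of F_i and G_j (viewed as morphisms to the common object c (f i) = c (g j)), together with the two evident projection morphisms (whose underlying functions are the projections of the fiber product and whose components are the pullback projections in D), is a pullback of f and g in Tw(D). -/

import Mathlib

set_option maxHeartbeats 1000000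
open CategoryTheory CategoryTheory.Limits

universe v u

/-- An object of the Grothendieck twist `Tw(D)`: a finite index type together with a
family of objects of `D`. -/
structure TwObj (D : Type u) [Category.{v} D] : Type (max u 1) where
  ι : Type
  [fin : Finite ι]
  obj : ι → D

attribute [instance] TwObj.fin

/-- A morphism of the Grothendieck twist `Tw(D)`: a function of index types together with
componentwise morphisms of `D`. -/
structure TwHom {D : Type u} [Category.{v} D] (X Y : TwObj D) : Type (max v 1) where
  toFun : X.ι → Y.ι
  map : ∀ i, X.obj i ⟶ Y.obj (toFun i)

theorem TwHom.hext {D : Type u} [Category.{v} D] {X Y : TwObj D} {f g : TwHom X Y}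
    (h1 : f.toFun = g.toFun) (h2 : HEq f.map g.map) : f = g := by
  cases f; cases g; cases h1; cases h2; rfl

instance (D : Type u) [Category.{v} D] : Category (TwObj D) where
  Hom X Y := TwHom X Y
  id X := ⟨id, fun i => 𝟙 _⟩
  comp f g := ⟨g.toFun ∘ f.toFun, fun i => f.map i ≫ g.map (f.toFun i)⟩
  id_comp f := TwHom.hext rfl (heq_of_eq (funext fun i => Category.id_comp _))
  comp_id f := TwHom.hext rfl (heq_of_eq (funext fun i => Category.comp_id _))
  assoc f g h := TwHom.hext rfl (heq_of_eq (funext fun i => Category.assoc _ _ _))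

variable {D : Type u} [Category.{v} D] [HasPullbacks D]

/-- The candidate pullback object in `Tw(D)`: indexed by the fiber product of the index
sets, with family given by pullbacks in `D`. -/
noncomputable def twPullbackObj {X Y Z : TwObj D} (f : X ⟶ Z) (g : Y ⟶ Z) : TwObj D where
  ι := {p : X.ι × Y.ι // f.toFun p.1 = g.toFun p.2}
  obj p := pullback (f.map p.1.1) (g.map p.1.2 ≫ eqToHom (congrArg Z.obj p.2.symm))

/-- The first projection of the candidate pullback. -/
noncomputable def twPullbackFst {X Y Z : TwObj D} (f : X ⟶ Z) (g : Y ⟶ Z) : twPullbackObj f g ⟶ X where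
  toFun p := p.1.1
  map p := pullback.fst (f.map p.1.1) (g.map p.1.2 ≫ eqToHom (congrArg Z.obj p.2.symm))

/-- The second projection of the candidate pullback. -/
noncomputable def twPullbackSnd {X Y Z : TwObj D} (f : X ⟶ Z) (g : Y ⟶ Z) : twPullbackObj f g ⟶ Y where
  toFun p := p.1.2
  map p := pullback.snd (f.map p.1.1) (g.map p.1.2 ≫ eqToHom (congrArg Z.obj p.2.symm))

lemma TwHom.ext' {X Y : TwObj D} {f g : TwHom X Y}
    (h1 : ∀ i, f.toFun i = g.toFun i)
    (h2 : ∀ i, f.map i ≫ eqToHom (congrArg Y.obj (h1 i)) = g.map i) : f = g := by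
  obtain ⟨ft, fm⟩ := f; obtain ⟨gt, gm⟩ := g
  obtain rfl : ft = gt := funext h1
  simp only [eqToHom_refl, Category.comp_id] at h2
  exact TwHom.hext rfl (heq_of_eq (funext h2))

lemma TwHom.map_congr {X Y : TwObj D} {f g : TwHom X Y} (h : f = g) (i : X.ι) :
    f.map i ≫ eqToHom (congrArg Y.obj (congrFun (congrArg TwHom.toFun h) i)) = g.map i := by
  subst h; simp

/-- The explicit object `{(i,j) | f i = g j}` with family the pullbacks
`a i ×_{c (f i)} b j`, together with the evident projections, is a pullback of `f` and
`g` in `Tw(D)`. -/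
theorem twPullback_isPullback {X Y Z : TwObj D} (f : X ⟶ Z) (g : Y ⟶ Z) :
    IsPullback (twPullbackFst f g) (twPullbackSnd f g) f g := by
  have fstnat : ∀ {p q : (twPullbackObj f g).ι} (e : p = q),
      eqToHom (congrArg (twPullbackObj f g).obj e) ≫
        pullback.fst (f.map q.1.1) (g.map q.1.2 ≫ eqToHom (congrArg Z.obj q.2.symm)) =
      pullback.fst (f.map p.1.1) (g.map p.1.2 ≫ eqToHom (congrArg Z.obj p.2.symm)) ≫
        eqToHom (congrArg (fun r : (twPullbackObj f g).ι => X.obj r.1.1) e) := by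
    rintro p q rfl; simp; exact Category.id_comp _
  have sndnat : ∀ {p q : (twPullbackObj f g).ι} (e : p = q),
      eqToHom (congrArg (twPullbackObj f g).obj e) ≫
        pullback.snd (f.map q.1.1) (g.map q.1.2 ≫ eqToHom (congrArg Z.obj q.2.symm)) =
      pullback.snd (f.map p.1.1) (g.map p.1.2 ≫ eqToHom (congrArg Z.obj p.2.symm)) ≫
        eqToHom (congrArg (fun r : (twPullbackObj f g).ι => Y.obj r.1.2) e) := by
    rintro p q rfl; simp; exact Category.id_comp _
  have comm : twPullbackFst f g ≫ f = twPullbackSnd f g ≫ g := by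
    refine TwHom.ext' (fun p => p.2) fun p => ?_
    show (pullback.fst _ _ ≫ f.map _) ≫ eqToHom _ = pullback.snd _ _ ≫ g.map _
    rw [pullback.condition]
    simp
    erw [eqToHom_trans, eqToHom_refl, Category.comp_id]
  refine ⟨⟨comm⟩, ⟨PullbackCone.IsLimit.mk comm ?_ ?_ ?_ ?_⟩⟩
  · intro s
    refine ⟨fun w => ⟨(s.fst.toFun w, s.snd.toFun w),
      congrFun (congrArg TwHom.toFun s.condition) w⟩, fun w => pullback.lift
        (s.fst.map w) (s.snd.map w) ?_⟩
    have h : (s.fst.map w ≫ f.map (s.fst.toFun w)) ≫ eqToHom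
        (congrArg Z.obj (congrFun (congrArg TwHom.toFun s.condition) w)) =
        s.snd.map w ≫ g.map (s.snd.toFun w) := TwHom.map_congr s.condition w
    rw [← Category.assoc, ← h]
    simp
  · intro s
    refine TwHom.ext' (fun w => rfl) fun w => ?_
    show (pullback.lift _ _ _ ≫ pullback.fst _ _) ≫ eqToHom _ = s.fst.map w
    erw [pullback.lift_fst]
    simp
    exact Category.comp_id _
  · intro s
    refine TwHom.ext' (fun w => rfl) fun w => ?_
    show (pullback.lift _ _ _ ≫ pullback.snd _ _) ≫ eqToHom _ = s.snd.map w
    erw [pullback.lift_snd]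
    simp
    exact Category.comp_id _
  · intro s m hfst hsnd
    have e1 : ∀ w, m.toFun w = ⟨(s.fst.toFun w, s.snd.toFun w),
        congrFun (congrArg TwHom.toFun s.condition) w⟩ := by
      intro w
      have t1 := congrFun (congrArg TwHom.toFun hfst) w
      have t2 := congrFun (congrArg TwHom.toFun hsnd) w
      exact Subtype.ext (Prod.ext t1 t2)
    refine TwHom.ext' e1 fun w => ?_
    apply pullback.hom_ext
    · have h : (m.map w ≫ pullback.fst _ _) ≫ eqToHom
          (congrArg X.obj (congrFun (congrArg TwHom.toFun hfst) w)) =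
          s.fst.map w := TwHom.map_congr hfst w
      dsimp only
      simp only [Category.assoc, fstnat (e1 w), pullback.lift_fst]
      rw [← h]
      exact ((Category.assoc _ _ _).trans (congrArg (fun k => m.map w ≫ k) (fstnat (e1 w)))).trans
        (Category.assoc _ _ _).symm
    · have h : (m.map w ≫ pullback.snd _ _) ≫ eqToHom
          (congrArg Y.obj (congrFun (congrArg TwHom.toFun hsnd) w)) =
          s.snd.map w := TwHom.map_congr hsnd w
      dsimp only
      simp only [Category.assoc, sndnat (e1 w), pullback.lift_snd]
      rw [← h]
      exact ((Category.assoc _ _ _).trans (congrArg (fun k => m.map w ≫ k) (sndnat (e1 w)))).trans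
        (Category.assoc _ _ _).symm
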